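/- With the hypotheses of the previous statement, equality ⟨ξ, A_μ⟩ = 0 holds if and only if μ(M − Y) = 0, i.e., the measure μ is supported in Y. -/

import Mathlib

open MeasureTheory Manifold

/-- With the hypotheses of Statement 6 (ω a smooth Lyapunov 1-form for (Φ,Y), μ a Φ-invariant positive Borel measure), equality ⟨ξ, 𝒜_μ⟩ = 0 holds iff μ(M − Y) = 0, i.e. μ is supported in Y.  Here ω is a smooth Lyapunov 1-form for (Φ, Y) in the class ξ — i.e.
(Λ1) ι_V(ω) < 0 on M − Y and (Λ2) ω = df on an open neighborhood U of Y with df|_Y = 0 —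
then for every Φ-invariant positive Borel measure μ on the closed manifold M one has
⟨ξ, 𝒜_μ⟩ = ∫_M ι_V(ω) dμ ≤ 0. -/
theorem lyapunov_one_form_pairing_zero_iff
    {E : Type*} [NormedAddCommGroup E] [NormedSpace ℝ E]
    {H : Type*} [TopologicalSpace H] (I : ModelWithCorners ℝ E H)
    {M : Type*} [TopologicalSpace M] [ChartedSpace H M] [IsManifold I (⊤ : ℕ∞) M]
    [CompactSpace M] [MeasurableSpace M] [BorelSpace M]
    -- the flow and its generating vector field
    (Φ : ℝ → M → M) (hΦcont : Continuous fun p : ℝ × M => Φ p.1 p.2)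
    (hΦ0 : ∀ x, Φ 0 x = x) (hΦadd : ∀ s t x, Φ s (Φ t x) = Φ (s + t) x)
    (V : M → E) (hV : ContMDiff I 𝓘(ℝ, E) (⊤ : ℕ∞) V)
    (hgen : ∀ (g : M → ℝ), ContMDiff I 𝓘(ℝ, ℝ) (⊤ : ℕ∞) g → ∀ x,
      HasDerivAt (fun t => g (Φ t x)) (mfderiv I 𝓘(ℝ, ℝ) g x (V x)) 0)
    -- the closed flow-invariant subset Y
    (Y : Set M) (hYclosed : IsClosed Y) (hYinv : ∀ t, ∀ x ∈ Y, Φ t x ∈ Y)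
    -- the smooth closed Lyapunov 1-form ω for (Φ, Y)
    (ω : M → (E →L[ℝ] ℝ)) (hω : ContMDiff I 𝓘(ℝ, E →L[ℝ] ℝ) (⊤ : ℕ∞) ω)
    (hclosed : ∀ x : M, ∃ W : Set M, IsOpen W ∧ x ∈ W ∧ ∃ g : M → ℝ,
      ContMDiffOn I 𝓘(ℝ, ℝ) (⊤ : ℕ∞) g W ∧ ∀ y ∈ W, ω y = mfderiv I 𝓘(ℝ, ℝ) g y)
    (hL1 : ∀ x ∉ Y, ω x (V x) < 0)
    (hL2 : ∃ U : Set M, IsOpen U ∧ Y ⊆ U ∧ ∃ f : M → ℝ,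
      ContMDiffOn I 𝓘(ℝ, ℝ) (⊤ : ℕ∞) f U ∧ (∀ x ∈ U, ω x = mfderiv I 𝓘(ℝ, ℝ) f x) ∧
      ∀ x ∈ Y, mfderiv I 𝓘(ℝ, ℝ) f x = 0)
    -- the invariant positive finite Borel measure
    (μ : Measure M) [IsFiniteMeasure μ] (hμ : ∀ t, Measure.map (Φ t) μ = μ) :
    ∫ x, ω x (V x) ∂μ = 0 ↔ μ Yᶜ = 0 := by
  obtain ⟨U, hUopen, hYU, f, hfU, hωf, hdf⟩ := hL2
  have hzeroY : ∀ x ∈ Y, ω x (V x) = 0 := by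
    intro x hx
    rw [hωf x (hYU hx), hdf x hx]
    rfl
  have hcont : Continuous fun x => ω x (V x) :=
    (hω.continuous.clm_apply hV.continuous)
  have hint : Integrable (fun x => ω x (V x)) μ := by
    have := hcont.continuousOn.integrableOn_compact' (μ := μ) isCompact_univ MeasurableSet.univ
    rwa [integrableOn_univ] at this
  have hnonpos : ∀ x, ω x (V x) ≤ 0 := by
    intro x
    by_cases hx : x ∈ Y
    · exact le_of_eq (hzeroY x hx)
    · exact le_of_lt (hL1 x hx)
  constructor
  · intro h0
    have hnn : 0 ≤ᵐ[μ] fun x => -(ω x (V x)) := by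
      filter_upwards with x using neg_nonneg.mpr (hnonpos x)
    have hint' : Integrable (fun x => -(ω x (V x))) μ := hint.neg
    have : ∫ x, -(ω x (V x)) ∂μ = 0 := by
      rw [integral_neg, h0, neg_zero]
    have hae : (fun x => -(ω x (V x))) =ᵐ[μ] 0 :=
      (integral_eq_zero_iff_of_nonneg_ae hnn hint').mp this
    have hnull : μ {x | ω x (V x) ≠ 0} = 0 := by
      have := hae
      rw [Filter.EventuallyEq, ae_iff] at this
      convert this using 2
      ext x
      simp [neg_eq_zero]
    refine measure_mono_null ?_ hnull
    intro x hx
    exact ne_of_lt (hL1 x hx)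
  · intro hμY
    have hae : (fun x => ω x (V x)) =ᵐ[μ] 0 := by
      rw [Filter.EventuallyEq, ae_iff]
      refine measure_mono_null ?_ hμY
      intro x hx
      simp only [Set.mem_setOf_eq, Pi.zero_apply] at hx
      intro hxY
      exact hx (hzeroY x hxY)
    rw [integral_congr_ae hae]
    simp
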